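/- Let $R$ be a local ring with maximal ideal $\mathfrak{m}$ and residue field $\kappa$, and let $a$ be an $m \times m$ matrix over $R$ whose reduction $\bar{a}$ modulo $\mathfrak{m}$ is diagonalizable over $\kappa$ with eigenvalues $\bar\lambda_1, \dots, \bar\lambda_m \in \kappa$ that lift to $\lambda_1, \dots, \lambda_m \in R$ which are eigenvalues of $a$ with $\lambda_i - \lambda_j$ a unit whenever $\bar\lambda_i \ne \bar\lambda_j$. For each $i$, the operator $p_i := \prod_{j :\, \lambda_j \ne \lambda_i} (\lambda_i - \lambda_j)^{-1}(a - \lambda_j)$ is well-defined; if $e_1, \dots, e_m \in R^m$ reduce to an eigenbasis of $\bar{a}$ with $\bar{a} \bar{e}_i = \bar\lambda_i \bar{e}_i$, and $a$ satisfies $\prod_{\text{distinct } \lambda}(a - \lambda) = 0$, then $E_i := p_i e_i$ satisfies $a E_i = \lambda_i E_i$, the reduction of $E_i$ is $\bar{e}_i$, and $E_1, \dots, E_m$ form a basis of $R^m$. -/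

import Mathlib

open IsLocalRing

private lemma listprod_smul_aux {n R : Type*} [Fintype n] [DecidableEq n] [CommRing R]
    (c : R → R) (A : R → Matrix n n R) (l : List R) :
    (l.map fun μ => c μ • A μ).prod = (l.map c).prod • (l.map A).prod := by
  induction l with
  | nil => simp
  | cons x xs ih =>
    simp only [List.map_cons, List.prod_cons, ih, smul_mul_assoc, mul_smul_comm, smul_smul]
    rw [mul_comm (c x)]

theorem stmt_19 {R : Type*} [CommRing R] [IsLocalRing R] [DecidableEq R]
    (m : ℕ) (a : Matrix (Fin m) (Fin m) R) (lam : Fin m → R)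
    (hunit : ∀ i j, residue R (lam i) ≠ residue R (lam j) → IsUnit (lam i - lam j))
    (hdist : ∀ i j, lam i ≠ lam j → residue R (lam i) ≠ residue R (lam j))
    (e : Fin m → (Fin m → R))
    (hbasis : (Matrix.of fun i j => residue R (e i j)).det ≠ 0)
    (heig : ∀ i, (a.map (residue R)).mulVec (fun j => residue R (e i j)) =
      residue R (lam i) • fun j => residue R (e i j))
    (hmin : (((Finset.univ.image lam).toList.map
      (fun μ => a - μ • (1 : Matrix (Fin m) (Fin m) R))).prod) = 0) :
    ∀ i : Fin m,
      letI p : Matrix (Fin m) (Fin m) R :=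
        ((((Finset.univ.image lam).erase (lam i)).toList.map
          (fun μ => Ring.inverse (lam i - μ) • (a - μ • (1 : Matrix (Fin m) (Fin m) R)))).prod)
      a.mulVec (p.mulVec (e i)) = lam i • p.mulVec (e i) ∧
        (fun j => residue R (p.mulVec (e i) j)) = (fun j => residue R (e i j)) ∧
        IsUnit (Matrix.of fun i' j =>
          (((((Finset.univ.image lam).erase (lam i')).toList.map
            (fun μ => Ring.inverse (lam i' - μ) •
              (a - μ • (1 : Matrix (Fin m) (Fin m) R)))).prod).mulVec (e i')) j).det := by
  classical
  have hmem : ∀ i : Fin m, lam i ∈ Finset.univ.image lam :=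
    fun i => Finset.mem_image_of_mem lam (Finset.mem_univ i)
  have hcomm : ∀ μ ν : R,
      Commute (a - μ • (1 : Matrix (Fin m) (Fin m) R)) (a - ν • 1) := by
    intro μ ν
    show (a - μ • 1) * (a - ν • 1) = (a - ν • 1) * (a - μ • 1)
    simp only [sub_mul, mul_sub, smul_mul_assoc, mul_smul_comm, one_mul, mul_one, smul_smul,
      smul_sub]
    rw [mul_comm μ ν]
    abel
  -- the key annihilation identity
  have key : ∀ i : Fin m,
      (a - lam i • 1) * ((((Finset.univ.image lam).erase (lam i)).toList.map
        (fun μ => Ring.inverse (lam i - μ) • (a - μ • (1 : Matrix (Fin m) (Fin m) R)))).prod)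
        = 0 := by
    intro i
    set l := ((Finset.univ.image lam).erase (lam i)).toList with hl
    rw [listprod_smul_aux, mul_smul_comm]
    have hperm : List.Perm ((lam i :: l).map (fun μ => a - μ • (1 : Matrix (Fin m) (Fin m) R)))
        ((Finset.univ.image lam).toList.map (fun μ => a - μ • 1)) := by
      refine List.Perm.map _ ?_
      have h := Finset.toList_insert (Finset.notMem_erase (lam i) (Finset.univ.image lam))
      rw [Finset.insert_erase (hmem i)] at h
      exact h.symm
    have hpw : ((lam i :: l).map
        (fun μ => a - μ • (1 : Matrix (Fin m) (Fin m) R))).Pairwise Commute := by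
      refine List.pairwise_of_forall_mem_list ?_
      intro x hx y hy
      simp only [List.mem_map] at hx hy
      obtain ⟨μ, -, rfl⟩ := hx
      obtain ⟨ν, -, rfl⟩ := hy
      exact hcomm μ ν
    have h0 := hperm.prod_eq' hpw
    rw [hmin, List.map_cons, List.prod_cons] at h0
    rw [h0, smul_zero]
  -- eigenvector property
  have heigAll : ∀ i : Fin m,
      a.mulVec (((((Finset.univ.image lam).erase (lam i)).toList.map
        (fun μ => Ring.inverse (lam i - μ) •
          (a - μ • (1 : Matrix (Fin m) (Fin m) R)))).prod).mulVec (e i)) =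
      lam i • ((((Finset.univ.image lam).erase (lam i)).toList.map
        (fun μ => Ring.inverse (lam i - μ) •
          (a - μ • (1 : Matrix (Fin m) (Fin m) R)))).prod).mulVec (e i) := by
    intro i
    have h1 : a * ((((Finset.univ.image lam).erase (lam i)).toList.map
        (fun μ => Ring.inverse (lam i - μ) •
          (a - μ • (1 : Matrix (Fin m) (Fin m) R)))).prod) =
        lam i • ((((Finset.univ.image lam).erase (lam i)).toList.map
        (fun μ => Ring.inverse (lam i - μ) •
          (a - μ • (1 : Matrix (Fin m) (Fin m) R)))).prod) := by
      have h := key i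
      rw [sub_mul, sub_eq_zero] at h
      rw [h, smul_mul_assoc, one_mul]
    rw [Matrix.mulVec_mulVec, h1, Matrix.smul_mulVec]
  -- reduction property
  have hres : ∀ i : Fin m,
      (fun j => residue R (((((Finset.univ.image lam).erase (lam i)).toList.map
        (fun μ => Ring.inverse (lam i - μ) •
          (a - μ • (1 : Matrix (Fin m) (Fin m) R)))).prod).mulVec (e i) j)) =
      (fun j => residue R (e i j)) := by
    intro i
    have hfix : ∀ L : List R,
        (∀ μ ∈ L, residue R (lam i) ≠ residue R μ ∧ IsUnit (lam i - μ)) →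
        ((L.map (fun μ => Ring.inverse (lam i - μ) •
            (a - μ • (1 : Matrix (Fin m) (Fin m) R)))).prod.map (residue R)).mulVec
          (fun j => residue R (e i j)) = (fun j => residue R (e i j)) := by
      intro L
      induction L with
      | nil =>
        intro _
        rw [List.map_nil, List.prod_nil,
          Matrix.map_one _ (map_zero (residue R)) (map_one (residue R)), Matrix.one_mulVec]
      | cons μ L ih =>
        intro hL
        have hμ := hL μ List.mem_cons_self
        rw [List.map_cons, List.prod_cons, Matrix.map_mul, ← Matrix.mulVec_mulVec,
          ih (fun ν hν => hL ν (List.mem_cons_of_mem μ hν))]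
        rw [Matrix.map_smul' _ _ _ (fun x y => map_mul (residue R) x y)]
        rw [Matrix.map_sub _ (fun x y => map_sub (residue R) x y)]
        rw [Matrix.map_smul' _ _ _ (fun x y => map_mul (residue R) x y),
          Matrix.map_one _ (map_zero (residue R)) (map_one (residue R))]
        rw [Matrix.smul_mulVec, Matrix.sub_mulVec, heig i, Matrix.smul_mulVec,
          Matrix.one_mulVec, ← sub_smul, smul_smul, ← map_sub, ← map_mul,
          Ring.inverse_mul_cancel _ hμ.2, map_one, one_smul]
    have hcond : ∀ μ ∈ ((Finset.univ.image lam).erase (lam i)).toList,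
        residue R (lam i) ≠ residue R μ ∧ IsUnit (lam i - μ) := by
      intro μ hμ
      rw [Finset.mem_toList, Finset.mem_erase] at hμ
      obtain ⟨hne, hmemS⟩ := hμ
      obtain ⟨j, -, rfl⟩ := Finset.mem_image.mp hmemS
      have hne' : lam i ≠ lam j := fun h => hne h.symm
      exact ⟨hdist i j hne', hunit i j (hdist i j hne')⟩
    funext j
    rw [RingHom.map_mulVec]
    have := congrFun (hfix _ hcond) j
    exact this
  -- determinant is a unit
  have hdet : IsUnit (Matrix.of fun i' j =>
      (((((Finset.univ.image lam).erase (lam i')).toList.map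
        (fun μ => Ring.inverse (lam i' - μ) •
          (a - μ • (1 : Matrix (Fin m) (Fin m) R)))).prod).mulVec (e i')) j).det := by
    by_contra h
    have hmem' : (Matrix.of fun i' j =>
        (((((Finset.univ.image lam).erase (lam i')).toList.map
          (fun μ => Ring.inverse (lam i' - μ) •
            (a - μ • (1 : Matrix (Fin m) (Fin m) R)))).prod).mulVec (e i')) j).det ∈
        maximalIdeal R := h
    have h0 : residue R (Matrix.of fun i' j =>
        (((((Finset.univ.image lam).erase (lam i')).toList.map
          (fun μ => Ring.inverse (lam i' - μ) •
            (a - μ • (1 : Matrix (Fin m) (Fin m) R)))).prod).mulVec (e i')) j).det = 0 :=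
      Ideal.Quotient.eq_zero_iff_mem.mpr hmem'
    rw [RingHom.map_det, RingHom.mapMatrix_apply] at h0
    have heq : (Matrix.of fun i' j =>
        (((((Finset.univ.image lam).erase (lam i')).toList.map
          (fun μ => Ring.inverse (lam i' - μ) •
            (a - μ • (1 : Matrix (Fin m) (Fin m) R)))).prod).mulVec (e i')) j).map (residue R)
        = Matrix.of fun i j => residue R (e i j) := by
      ext i' j
      exact congrFun (hres i') j
    rw [heq] at h0
    exact hbasis h0
  intro i
  exact ⟨heigAll i, hres i, hdet⟩
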